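/- Let X and Y be atomless real random variables with densities p and q. Then for every a \in R, W_1(X, Y) \le \int_R |x - a| |p(x) - q(x)| dx. -/

import Mathlib

open MeasureTheory Real
open scoped ENNReal NNReal

lemma w1aux_integral_wd (f : ℝ → ℝ) (hf : ∀ x, 0 ≤ f x) (hm : Measurable f) (g : ℝ → ℝ) :
    ∫ x, g x ∂(volume.withDensity fun x => ENNReal.ofReal (f x)) = ∫ x, f x * g x := by
  have h : (fun x => ENNReal.ofReal (f x)) = fun x => ((f x).toNNReal : ℝ≥0∞) := rfl
  rw [h, integral_withDensity_eq_integral_smul (hm.real_toNNReal)]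
  congr 1; ext x
  simp [NNReal.smul_def, Real.coe_toNNReal _ (hf x)]

lemma w1aux_integrable_wd (f : ℝ → ℝ) (hf : ∀ x, 0 ≤ f x) (hm : Measurable f) (g : ℝ → ℝ)
    (h : Integrable (fun x => g x * f x)) :
    Integrable g (volume.withDensity fun x => ENNReal.ofReal (f x)) := by
  rw [integrable_withDensity_iff (hm.ennreal_ofReal) (ae_of_all _ fun x => ENNReal.ofReal_lt_top)]
  simpa [ENNReal.toReal_ofReal (hf _)] using h

/-- Wasserstein-1 distance on `ℝ`, as the infimum of the transport cost over couplings. -/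
noncomputable def W1 (μ ν : Measure ℝ) : ℝ :=
  ⨅ (c : {c : Measure (ℝ × ℝ) // c.map Prod.fst = μ ∧ c.map Prod.snd = ν}),
    ∫ z, |z.1 - z.2| ∂c.1

/-- For atomless real random variables `X`, `Y` with densities `p`, `q` (with respect to
Lebesgue measure), for every `a ∈ ℝ`: `W₁(X, Y) ≤ ∫ |x - a| |p(x) - q(x)| dx`. -/
theorem w1_weighted_tv_bound
    (p q : ℝ → ℝ) (hp0 : ∀ x, 0 ≤ p x) (hq0 : ∀ x, 0 ≤ q x)
    (hpm : Measurable p) (hqm : Measurable q)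
    (hpint : ∫ x, p x = 1) (hqint : ∫ x, q x = 1)
    (a : ℝ)
    (hint : Integrable (fun x => |x - a| * |p x - q x|)) :
    W1 (volume.withDensity (fun x => ENNReal.ofReal (p x)))
       (volume.withDensity (fun x => ENNReal.ofReal (q x)))
      ≤ ∫ x, |x - a| * |p x - q x| := by
  set μ := volume.withDensity (fun x => ENNReal.ofReal (p x)) with hμdef
  set ν := volume.withDensity (fun x => ENNReal.ofReal (q x)) with hνdef
  have hRHS0 : 0 ≤ ∫ x, |x - a| * |p x - q x| :=
    integral_nonneg fun x => mul_nonneg (abs_nonneg _) (abs_nonneg _)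
  have hbdd : BddBelow (Set.range fun
      (c : {c : Measure (ℝ × ℝ) // c.map Prod.fst = μ ∧ c.map Prod.snd = ν}) =>
      ∫ z, |z.1 - z.2| ∂c.1) := by
    refine ⟨0, ?_⟩
    rintro x ⟨c, rfl⟩
    exact integral_nonneg fun z => abs_nonneg _
  have hpI : Integrable p := by
    by_contra h; rw [integral_undef h] at hpint; norm_num at hpint
  have hqI : Integrable q := by
    by_contra h; rw [integral_undef h] at hqint; norm_num at hqint
  set f := fun x => max (p x - q x) 0 with hfdef
  set g := fun x => max (q x - p x) 0 with hgdef
  set m := fun x => min (p x) (q x) with hmdef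
  have hf0 : ∀ x, 0 ≤ f x := fun x => le_max_right _ _
  have hg0 : ∀ x, 0 ≤ g x := fun x => le_max_right _ _
  have hm0 : ∀ x, 0 ≤ m x := fun x => le_min (hp0 x) (hq0 x)
  have hfm : Measurable f := (hpm.sub hqm).max measurable_const
  have hgm : Measurable g := (hqm.sub hpm).max measurable_const
  have hmm : Measurable m := hpm.min hqm
  have hfg : ∀ x, f x + g x = |p x - q x| := by
    intro x
    rcases le_total (p x) (q x) with h | h
    · simp [hfdef, hgdef, max_eq_right (sub_nonpos.2 h), max_eq_left (sub_nonneg.2 h),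
        abs_of_nonpos (sub_nonpos.2 h)]
    · simp [hfdef, hgdef, max_eq_left (sub_nonneg.2 h), max_eq_right (sub_nonpos.2 h),
        abs_of_nonneg (sub_nonneg.2 h)]
  have hmf : ∀ x, m x + f x = p x := by
    intro x
    rcases le_total (p x) (q x) with h | h
    · simp [hmdef, hfdef, min_eq_left h, max_eq_right (sub_nonpos.2 h)]
    · simp [hmdef, hfdef, min_eq_right h, max_eq_left (sub_nonneg.2 h)]
  have hmg : ∀ x, m x + g x = q x := by
    intro x
    rcases le_total (p x) (q x) with h | h
    · simp [hmdef, hgdef, min_eq_left h, max_eq_left (sub_nonneg.2 h)]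
    · simp [hmdef, hgdef, min_eq_right h, max_eq_right (sub_nonpos.2 h)]
  have hfI : Integrable f := (hpI.sub hqI).pos_part
  have hgI : Integrable g := (hqI.sub hpI).pos_part
  set T := ∫ x, f x with hTdef
  have hT0 : 0 ≤ T := integral_nonneg hf0
  have hgT : ∫ x, g x = T := by
    have h1 : T - ∫ x, g x = 0 := by
      rw [hTdef, ← integral_sub hfI hgI]
      have h2 : (fun x => f x - g x) = fun x => p x - q x := by
        funext x
        rcases le_total (p x) (q x) with h | h
        · simp [hfdef, hgdef, max_eq_right (sub_nonpos.2 h), max_eq_left (sub_nonneg.2 h)]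
        · simp [hfdef, hgdef, max_eq_left (sub_nonneg.2 h), max_eq_right (sub_nonpos.2 h)]
      rw [h2, integral_sub hpI hqI, hpint, hqint, sub_self]
    linarith
  set μe := volume.withDensity (fun x => ENNReal.ofReal (f x)) with hμedef
  set νe := volume.withDensity (fun x => ENNReal.ofReal (g x)) with hνedef
  set μm := volume.withDensity (fun x => ENNReal.ofReal (m x)) with hμmdef
  have hμeU : μe Set.univ = ENNReal.ofReal T := by
    rw [hμedef, withDensity_apply _ MeasurableSet.univ, Measure.restrict_univ,
      ← ofReal_integral_eq_lintegral_ofReal hfI (ae_of_all _ hf0)]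
  have hνeU : νe Set.univ = ENNReal.ofReal T := by
    rw [hνedef, withDensity_apply _ MeasurableSet.univ, Measure.restrict_univ,
      ← ofReal_integral_eq_lintegral_ofReal hgI (ae_of_all _ hg0), hgT]
  have haddμ : μm + μe = μ := by
    rw [hμmdef, hμedef, hμdef, ← withDensity_add_left hmm.ennreal_ofReal]
    congr 1
    funext x
    simp [Pi.add_apply, ← ENNReal.ofReal_add (hm0 x) (hf0 x), hmf x]
  have haddν : μm + νe = ν := by
    rw [hμmdef, hνedef, hνdef, ← withDensity_add_left hmm.ennreal_ofReal]
    congr 1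
    funext x
    simp [Pi.add_apply, ← ENNReal.ofReal_add (hm0 x) (hg0 x), hmg x]
  set dg : ℝ → ℝ × ℝ := fun x => (x, x) with hdgdef
  have hdgm : Measurable dg := measurable_id.prodMk measurable_id
  have hCm : Measurable fun z : ℝ × ℝ => |z.1 - z.2| := (measurable_fst.sub measurable_snd).abs
  rcases hT0.eq_or_lt with h0 | hTpos
  · -- T = 0 : p = q a.e., diagonal coupling of μ
    have hfz : f =ᵐ[volume] 0 := (integral_eq_zero_iff_of_nonneg hf0 hfI).mp h0.symm
    have hgz : g =ᵐ[volume] 0 := by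
      refine (integral_eq_zero_iff_of_nonneg hg0 hgI).mp ?_
      rw [hgT]; exact h0.symm
    have hpq : (fun x => ENNReal.ofReal (p x)) =ᵐ[volume] (fun x => ENNReal.ofReal (q x)) := by
      filter_upwards [hfz, hgz] with x h1 h2
      have h3 : p x = q x := by
        have h4 : p x - q x ≤ 0 := by
          by_contra h5
          simp [hfdef, max_eq_left (le_of_lt (not_le.mp h5))] at h1
          linarith [not_le.mp h5]
        have h6 : q x - p x ≤ 0 := by
          by_contra h5
          simp [hgdef, max_eq_left (le_of_lt (not_le.mp h5))] at h2
          linarith [not_le.mp h5]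
        linarith
      rw [h3]
    have hμν : μ = ν := withDensity_congr_ae hpq
    set c : Measure (ℝ × ℝ) := μ.map dg with hcdef
    have h1 : c.map Prod.fst = μ := by
      rw [hcdef, Measure.map_map measurable_fst hdgm]
      exact Measure.map_id
    have h2 : c.map Prod.snd = ν := by
      rw [hcdef, Measure.map_map measurable_snd hdgm]
      rw [show Prod.snd ∘ dg = id from rfl, Measure.map_id, hμν]
    have key : W1 μ ν ≤ ∫ z, |z.1 - z.2| ∂c := by
      unfold W1
      exact ciInf_le hbdd ⟨c, h1, h2⟩
    refine key.trans ?_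
    have hz : ∫ z, |z.1 - z.2| ∂c = 0 := by
      rw [hcdef, integral_map hdgm.aemeasurable hCm.aestronglyMeasurable]
      simp [hdgdef]
    rw [hz]; exact hRHS0
  · -- main case T > 0
    have hoT : ENNReal.ofReal T ≠ 0 := by
      simp only [ne_eq, ENNReal.ofReal_eq_zero, not_le]; exact hTpos
    set s : ℝ≥0∞ := (ENNReal.ofReal T)⁻¹ with hsdef
    have hs_top : s ≠ ⊤ := ENNReal.inv_ne_top.2 hoT
    have hsT : s * ENNReal.ofReal T = 1 := ENNReal.inv_mul_cancel hoT ENNReal.ofReal_ne_top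
    haveI : IsFiniteMeasure μe := ⟨by rw [hμeU]; exact ENNReal.ofReal_lt_top⟩
    haveI : IsFiniteMeasure νe := ⟨by rw [hνeU]; exact ENNReal.ofReal_lt_top⟩
    set pr := μe.prod νe with hprdef
    set c : Measure (ℝ × ℝ) := μm.map dg + s • pr with hcdef
    have h1 : c.map Prod.fst = μ := by
      rw [hcdef, Measure.map_add _ _ measurable_fst, Measure.map_smul,
        Measure.map_map measurable_fst hdgm, show Prod.fst ∘ dg = id from rfl,
        Measure.map_id, hprdef, Measure.map_fst_prod, hνeU, smul_smul, hsT, one_smul, haddμ]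
    have h2 : c.map Prod.snd = ν := by
      rw [hcdef, Measure.map_add _ _ measurable_snd, Measure.map_smul,
        Measure.map_map measurable_snd hdgm, show Prod.snd ∘ dg = id from rfl,
        Measure.map_id, hprdef, Measure.map_snd_prod, hμeU, smul_smul, hsT, one_smul, haddν]
    -- integrability of |x - a| * f x and |x - a| * g x
    have habsm : Measurable fun x : ℝ => |x - a| := (measurable_id.sub_const a).abs
    have hfa : Integrable (fun x => |x - a| * f x) := by
      refine hint.mono (habsm.mul hfm).aestronglyMeasurable (ae_of_all _ fun x => ?_)
      simp only [Real.norm_eq_abs, abs_mul, abs_abs]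
      have : |f x| ≤ |p x - q x| := by
        rw [abs_of_nonneg (hf0 x), ← hfg x]; linarith [hg0 x]
      exact mul_le_mul_of_nonneg_left this (abs_nonneg _)
    have hga : Integrable (fun x => |x - a| * g x) := by
      refine hint.mono (habsm.mul hgm).aestronglyMeasurable (ae_of_all _ fun x => ?_)
      simp only [Real.norm_eq_abs, abs_mul, abs_abs]
      have : |g x| ≤ |p x - q x| := by
        rw [abs_of_nonneg (hg0 x), ← hfg x]; linarith [hf0 x]
      exact mul_le_mul_of_nonneg_left this (abs_nonneg _)
    have hIμe : Integrable (fun x => |x - a|) μe := by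
      rw [hμedef]
      exact w1aux_integrable_wd f hf0 hfm _ hfa
    have hIνe : Integrable (fun x => |x - a|) νe := by
      rw [hνedef]
      exact w1aux_integrable_wd g hg0 hgm _ hga
    -- integrability of the coordinate functions over pr
    have hI1 : Integrable (fun z : ℝ × ℝ => |z.1 - a|) pr := by
      have h3 : Integrable (fun x => |x - a|) (pr.map Prod.fst) := by
        rw [hprdef, Measure.map_fst_prod, hνeU]
        exact hIμe.smul_measure ENNReal.ofReal_ne_top
      exact (integrable_map_measure habsm.aestronglyMeasurable
        measurable_fst.aemeasurable).mp h3
    have hI2 : Integrable (fun z : ℝ × ℝ => |z.2 - a|) pr := by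
      have h3 : Integrable (fun x => |x - a|) (pr.map Prod.snd) := by
        rw [hprdef, Measure.map_snd_prod, hμeU]
        exact hIνe.smul_measure ENNReal.ofReal_ne_top
      exact (integrable_map_measure habsm.aestronglyMeasurable
        measurable_snd.aemeasurable).mp h3
    have htri : ∀ z : ℝ × ℝ, |z.1 - z.2| ≤ |z.1 - a| + |z.2 - a| := by
      intro z
      calc |z.1 - z.2| ≤ |z.1 - a| + |a - z.2| := abs_sub_le _ _ _
        _ = |z.1 - a| + |z.2 - a| := by rw [abs_sub_comm a]
    have hICpr : Integrable (fun z : ℝ × ℝ => |z.1 - z.2|) pr := by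
      refine (hI1.add hI2).mono hCm.aestronglyMeasurable (ae_of_all _ fun z => ?_)
      simp only [Real.norm_eq_abs, abs_abs]
      exact (htri z).trans (le_abs_self _)
    have hICdiag : Integrable (fun z : ℝ × ℝ => |z.1 - z.2|) (μm.map dg) := by
      refine (integrable_map_measure hCm.aestronglyMeasurable hdgm.aemeasurable).mpr ?_
      have : (fun x => |((dg x).1 : ℝ) - (dg x).2|) = fun _ => (0 : ℝ) := by
        funext x; simp [hdgdef]
      rw [show ((fun z : ℝ × ℝ => |z.1 - z.2|) ∘ dg) = fun _ => (0 : ℝ) from this]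
      exact integrable_zero _ _ _
    have hICc : Integrable (fun z : ℝ × ℝ => |z.1 - z.2|) c := by
      rw [hcdef]
      exact hICdiag.add_measure (hICpr.smul_measure hs_top)
    have key : W1 μ ν ≤ ∫ z, |z.1 - z.2| ∂c := by
      unfold W1
      exact ciInf_le hbdd ⟨c, h1, h2⟩
    refine key.trans ?_
    rw [hcdef, integral_add_measure hICdiag (hICpr.smul_measure hs_top)]
    have e1 : ∫ z, |z.1 - z.2| ∂(μm.map dg) = 0 := by
      rw [integral_map hdgm.aemeasurable hCm.aestronglyMeasurable]
      simp [hdgdef]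
    rw [e1, zero_add, integral_smul_measure]
    have hsr : s.toReal = 1 / T := by
      rw [hsdef, ENNReal.toReal_inv, ENNReal.toReal_ofReal hT0, one_div]
    -- bound the product integral
    have hB : ∫ z, |z.1 - z.2| ∂pr ≤ ∫ z, (|z.1 - a| + |z.2 - a|) ∂pr :=
      integral_mono_of_nonneg (ae_of_all _ fun z => abs_nonneg _) (hI1.add hI2)
        (ae_of_all _ fun z => htri z)
    have e2 : ∫ z, (|z.1 - a| + |z.2 - a|) ∂pr
        = T * (∫ x, |x - a| ∂μe) + T * (∫ x, |x - a| ∂νe) := by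
      rw [integral_add hI1 hI2]
      have e3 : ∫ z : ℝ × ℝ, |z.1 - a| ∂pr = T * ∫ x, |x - a| ∂μe := by
        rw [show (∫ z : ℝ × ℝ, |z.1 - a| ∂pr) = ∫ x, |x - a| ∂(pr.map Prod.fst) from
          (integral_map measurable_fst.aemeasurable habsm.aestronglyMeasurable).symm,
          hprdef, Measure.map_fst_prod, hνeU, integral_smul_measure,
          ENNReal.toReal_ofReal hT0, smul_eq_mul]
      have e4 : ∫ z : ℝ × ℝ, |z.2 - a| ∂pr = T * ∫ x, |x - a| ∂νe := by
        rw [show (∫ z : ℝ × ℝ, |z.2 - a| ∂pr) = ∫ x, |x - a| ∂(pr.map Prod.snd) from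
          (integral_map measurable_snd.aemeasurable habsm.aestronglyMeasurable).symm,
          hprdef, Measure.map_snd_prod, hμeU, integral_smul_measure,
          ENNReal.toReal_ofReal hT0, smul_eq_mul]
      rw [e3, e4]
    have eμe : ∫ x, |x - a| ∂μe = ∫ x, f x * |x - a| := by
      rw [hμedef]; exact w1aux_integral_wd f hf0 hfm _
    have eνe : ∫ x, |x - a| ∂νe = ∫ x, g x * |x - a| := by
      rw [hνedef]; exact w1aux_integral_wd g hg0 hgm _
    have efinal : (∫ x, f x * |x - a|) + ∫ x, g x * |x - a| = ∫ x, |x - a| * |p x - q x| := by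
      have hfa' : Integrable (fun x => f x * |x - a|) := by
        simpa [mul_comm] using hfa
      have hga' : Integrable (fun x => g x * |x - a|) := by
        simpa [mul_comm] using hga
      rw [← integral_add hfa' hga']
      congr 1
      funext x
      rw [← hfg x]; ring
    calc s.toReal • ∫ z, |z.1 - z.2| ∂pr
        ≤ s.toReal • ∫ z, (|z.1 - a| + |z.2 - a|) ∂pr := by
          exact smul_le_smul_of_nonneg_left hB ENNReal.toReal_nonneg
      _ = ∫ x, |x - a| * |p x - q x| := by
          rw [e2, eμe, eνe, hsr, smul_eq_mul, ← efinal]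
          field_simp
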